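/- Fix integers d ≥ 1 and t ≥ 1 with d ≤ N. The set H_{d,t} of non-empty compact subsets K ⊆ ℝ^N containing an affinely dependent set of d+1 points whose pairwise distances are all at least 1/t is closed and nowhere dense in the hyperspace K(ℝ^N) with the Hausdorff metric. -/

import Mathlib

open Metric Set Filter Topology MeasureTheory TopologicalSpace

lemma isClosed_dep (N k : ℕ) :
    IsClosed {A : Fin k → EuclideanSpace ℝ (Fin N) | ¬ AffineIndependent ℝ A} := by
  classical
  set E := EuclideanSpace ℝ (Fin N)
  apply IsSeqClosed.isClosed
  intro A L hA hL
  have hw : ∀ n, ∃ v : Fin k → ℝ, ‖v‖ = 1 ∧ ∑ i, v i = 0 ∧ ∑ i, v i • A n i = 0 := by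
    intro n
    have h := hA n
    simp only [Set.mem_setOf_eq, affineIndependent_iff] at h
    push_neg at h
    obtain ⟨s, w, hw0, hw1, e, hes, hwe⟩ := h
    set w' : Fin k → ℝ := fun i => if i ∈ s then w i else 0 with hw'def
    have hsum : ∑ i, w' i = 0 := by
      rw [Finset.sum_ite_mem, Finset.univ_inter]; exact hw0
    have hsum2 : ∑ i, w' i • A n i = 0 := by
      have h2 : ∀ i, w' i • A n i = if i ∈ s then w i • A n i else 0 := by
        intro i; by_cases h : i ∈ s <;> simp [w', h]
      rw [Finset.sum_congr rfl (fun i _ => h2 i), Finset.sum_ite_mem, Finset.univ_inter]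
      exact hw1
    have hw'ne : w' ≠ 0 := by
      intro h
      apply hwe
      have := congrFun h e
      simpa [w', hes] using this
    have hnorm : ‖w'‖ ≠ 0 := by simpa using hw'ne
    refine ⟨‖w'‖⁻¹ • w', ?_, ?_, ?_⟩
    · rw [norm_smul, norm_inv, norm_norm, inv_mul_cancel₀ hnorm]
    · simp only [Pi.smul_apply, smul_eq_mul, ← Finset.mul_sum, hsum, mul_zero]
    · have : ∀ i, (‖w'‖⁻¹ • w') i • A n i = ‖w'‖⁻¹ • (w' i • A n i) := by
        intro i; simp [smul_smul]
      rw [Finset.sum_congr rfl (fun i _ => this i), ← Finset.smul_sum, hsum2, smul_zero]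
  choose v hv1 hv2 hv3 using hw
  have hvs : ∀ n, v n ∈ sphere (0 : Fin k → ℝ) 1 := by
    intro n; rw [mem_sphere_zero_iff_norm]; exact hv1 n
  obtain ⟨u, hu, φ, hφ, hutend⟩ := (isCompact_sphere (0 : Fin k → ℝ) 1).tendsto_subseq hvs
  intro hind
  rw [affineIndependent_iff] at hind
  have huco : ∀ i, Tendsto (fun n => v (φ n) i) atTop (𝓝 (u i)) := fun i =>
    ((continuous_apply i).tendsto u).comp hutend
  have hAco : ∀ i, Tendsto (fun n => A (φ n) i) atTop (𝓝 (L i)) := fun i =>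
    ((continuous_apply i).tendsto L).comp (hL.comp hφ.tendsto_atTop)
  have hsumu : ∑ i, u i = 0 := by
    have h1 : Tendsto (fun n => ∑ i, v (φ n) i) atTop (𝓝 (∑ i, u i)) :=
      tendsto_finset_sum _ (fun i _ => huco i)
    have h2 : (fun n => ∑ i, v (φ n) i) = fun _ => (0 : ℝ) := funext fun n => hv2 (φ n)
    rw [h2] at h1
    exact (tendsto_nhds_unique tendsto_const_nhds h1).symm
  have hsumu2 : ∑ i, u i • L i = 0 := by
    have h1 : Tendsto (fun n => ∑ i, v (φ n) i • A (φ n) i) atTop (𝓝 (∑ i, u i • L i)) :=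
      tendsto_finset_sum _ (fun i _ => (huco i).smul (hAco i))
    have h2 : (fun n => ∑ i, v (φ n) i • A (φ n) i) = fun _ => (0 : E) :=
      funext fun n => hv3 (φ n)
    rw [h2] at h1
    exact (tendsto_nhds_unique tendsto_const_nhds h1).symm
  have hu0 : u = 0 := funext fun i => hind Finset.univ u hsumu hsumu2 i (Finset.mem_univ i)
  rw [mem_sphere_zero_iff_norm, hu0, norm_zero] at hu
  exact one_ne_zero hu.symm

lemma span_ne_top {N d : ℕ} (hd : 1 ≤ d) (hdN : d ≤ N)
    (s : Finset (EuclideanSpace ℝ (Fin N))) (hcard : s.card ≤ d) :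
    affineSpan ℝ (s : Set (EuclideanSpace ℝ (Fin N))) ≠ ⊤ := by
  classical
  intro h
  have hfr : Module.finrank ℝ (vectorSpan ℝ (s : Set (EuclideanSpace ℝ (Fin N)))) ≤ d - 1 := by
    rcases s.eq_empty_or_nonempty with rfl | hne
    · rw [Finset.coe_empty, vectorSpan_empty]
      simp
    · have hc : s.card = (s.card - 1) + 1 := (Nat.succ_pred_eq_of_pos (Finset.card_pos.mpr hne)).symm
      have h2 := finrank_vectorSpan_image_finset_le ℝ (id : EuclideanSpace ℝ (Fin N) → _) s hc
      rw [Finset.image_id] at h2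
      exact h2.trans (by omega)
  have htop : vectorSpan ℝ (s : Set (EuclideanSpace ℝ (Fin N))) = ⊤ := by
    rw [← direction_affineSpan, h, AffineSubspace.direction_top]
  rw [htop] at hfr
  have hN : Module.finrank ℝ (⊤ : Submodule ℝ (EuclideanSpace ℝ (Fin N))) = N := by
    rw [finrank_top, finrank_euclideanSpace_fin]
  omega

lemma exists_avoid {N d : ℕ} (hd : 1 ≤ d) (hdN : d ≤ N) (F : Finset (EuclideanSpace ℝ (Fin N)))
    (x : EuclideanSpace ℝ (Fin N)) {δ : ℝ} (hδ : 0 < δ) :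
    ∃ x', dist x x' < δ ∧ ∀ s : Finset (EuclideanSpace ℝ (Fin N)), s ⊆ F → s.card ≤ d →
      x' ∉ affineSpan ℝ (s : Set (EuclideanSpace ℝ (Fin N))) := by
  classical
  set P := F.powerset.filter (fun s => s.card ≤ d) with hP
  set U : Set (EuclideanSpace ℝ (Fin N)) :=
    ⋃ s ∈ P, (affineSpan ℝ ((s : Finset (EuclideanSpace ℝ (Fin N))) : Set (EuclideanSpace ℝ (Fin N))) : Set (EuclideanSpace ℝ (Fin N))) with hU
  have hU0 : volume U = 0 := by
    refine measure_biUnion_null_iff (P.countable_toSet) |>.mpr ?_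
    intro s hs
    simp only [hP, Finset.coe_filter, Set.mem_setOf_eq, Finset.mem_coe, Finset.mem_filter] at hs
    exact Measure.addHaar_affineSubspace volume _ (span_ne_top hd hdN s hs.2)
  have hball : volume (ball x δ) ≠ 0 := (measure_ball_pos _ _ hδ).ne'
  have hns : ¬ (ball x δ ⊆ U) := fun h => hball (measure_mono_null h hU0)
  obtain ⟨x', hx'b, hx'U⟩ := not_subset.mp hns
  refine ⟨x', by rwa [dist_comm, ← mem_ball], fun s hsF hcard hmem => hx'U ?_⟩
  have hsP : s ∈ P := by
    rw [hP, Finset.mem_filter, Finset.mem_powerset]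
    exact ⟨hsF, hcard⟩
  exact Set.mem_biUnion hsP hmem

lemma ai_insert {N : ℕ} {s : Set (EuclideanSpace ℝ (Fin N))}
    (hs : AffineIndependent ℝ ((↑) : s → EuclideanSpace ℝ (Fin N)))
    {p : EuclideanSpace ℝ (Fin N)} (hp : p ∉ affineSpan ℝ s) :
    AffineIndependent ℝ ((↑) : ↥(insert p s) → EuclideanSpace ℝ (Fin N)) := by
  let i : ↥(insert p s) := ⟨p, Set.mem_insert p s⟩
  have hemb : ∀ x : {y : ↥(insert p s) // y ≠ i},
      ((x : ↥(insert p s)) : EuclideanSpace ℝ (Fin N)) ∈ s := by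
    rintro ⟨⟨y, hy⟩, hne⟩
    rcases hy with rfl | hys
    · exact (hne (Subtype.ext rfl)).elim
    · exact hys
  apply AffineIndependent.affineIndependent_of_notMem_span (i := i)
  · let e : {y : ↥(insert p s) // y ≠ i} ↪ s :=
      ⟨fun x => ⟨_, hemb x⟩, fun a b h => Subtype.ext (Subtype.ext (by simpa [Subtype.ext_iff] using h))⟩
    exact hs.comp_embedding e
  · intro hmem
    apply hp
    refine (affineSpan_mono ℝ ?_) hmem
    rintro y ⟨x, hx, rfl⟩
    exact hemb ⟨x, hx⟩

lemma exists_gp {N d : ℕ} (hd : 1 ≤ d) (hdN : d ≤ N) (F : Finset (EuclideanSpace ℝ (Fin N)))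
    {δ : ℝ} (hδ : 0 < δ) :
    ∃ F' : Finset (EuclideanSpace ℝ (Fin N)),
      (∀ x ∈ F, ∃ y ∈ F', dist x y < δ) ∧ (∀ y ∈ F', ∃ x ∈ F, dist x y < δ) ∧
      ∀ s : Finset (EuclideanSpace ℝ (Fin N)), s ⊆ F' → s.card ≤ d + 1 →
        AffineIndependent ℝ ((↑) : ↥(s : Set (EuclideanSpace ℝ (Fin N))) → EuclideanSpace ℝ (Fin N)) := by
  classical
  induction F using Finset.induction_on with
  | empty =>
      refine ⟨∅, by simp, by simp, fun s hs _ => ?_⟩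
      rw [Finset.subset_empty.mp hs]
      have he : ((∅ : Finset (EuclideanSpace ℝ (Fin N))) : Set (EuclideanSpace ℝ (Fin N))) = ∅ :=
        Finset.coe_empty
      rw [he]
      exact affineIndependent_of_subsingleton ℝ _
  | @insert a F₀ haF₀ ih =>
      obtain ⟨F', hF1, hF2, hF3⟩ := ih
      obtain ⟨a', ha'd, ha'span⟩ := exists_avoid hd hdN F' a hδ
      refine ⟨insert a' F', ?_, ?_, ?_⟩
      · intro x hx
        rcases Finset.mem_insert.mp hx with rfl | hx
        · exact ⟨a', Finset.mem_insert_self _ _, ha'd⟩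
        · obtain ⟨y, hy, hyd⟩ := hF1 x hx
          exact ⟨y, Finset.mem_insert_of_mem hy, hyd⟩
      · intro y hy
        rcases Finset.mem_insert.mp hy with rfl | hy
        · exact ⟨a, Finset.mem_insert_self _ _, ha'd⟩
        · obtain ⟨x, hx, hxd⟩ := hF2 y hy
          exact ⟨x, Finset.mem_insert_of_mem hx, hxd⟩
      · intro s hs hcard
        by_cases ha's : a' ∈ s
        · set s₀ := s.erase a' with hs₀
          have hs₀F : s₀ ⊆ F' := by
            intro x hx
            have hxs := Finset.mem_of_mem_erase hx
            have hxne := Finset.ne_of_mem_erase hx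
            rcases Finset.mem_insert.mp (hs hxs) with rfl | h
            · exact absurd rfl hxne
            · exact h
          have hs₀card : s₀.card ≤ d := by
            rw [hs₀, Finset.card_erase_of_mem ha's]
            omega
          have hind₀ := hF3 s₀ hs₀F (by omega)
          have hnotmem : a' ∉ affineSpan ℝ (s₀ : Set (EuclideanSpace ℝ (Fin N))) :=
            ha'span s₀ hs₀F hs₀card
          have h := ai_insert hind₀ hnotmem
          have hcoe : (insert a' (s₀ : Set (EuclideanSpace ℝ (Fin N)))) =
              (s : Set (EuclideanSpace ℝ (Fin N))) := by
            rw [hs₀, ← Finset.coe_insert, Finset.insert_erase ha's]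
          rw [hcoe] at h
          exact h
        · exact hF3 s (fun x hx => by
            rcases Finset.mem_insert.mp (hs hx) with rfl | h
            · exact absurd hx ha's
            · exact h) hcard

theorem stmt7 (N d t : ℕ) (hd : 1 ≤ d) (ht : 1 ≤ t) (hdN : d ≤ N) :
    IsClosed {K : NonemptyCompacts (EuclideanSpace ℝ (Fin N)) |
      ∃ A : Fin (d + 1) → EuclideanSpace ℝ (Fin N),
        (∀ m, A m ∈ (K : Set (EuclideanSpace ℝ (Fin N)))) ∧ ¬ AffineIndependent ℝ A ∧
        ∀ m m', m ≠ m' → (1 : ℝ) / t ≤ dist (A m) (A m')} ∧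
    IsNowhereDense {K : NonemptyCompacts (EuclideanSpace ℝ (Fin N)) |
      ∃ A : Fin (d + 1) → EuclideanSpace ℝ (Fin N),
        (∀ m, A m ∈ (K : Set (EuclideanSpace ℝ (Fin N)))) ∧ ¬ AffineIndependent ℝ A ∧
        ∀ m m', m ≠ m' → (1 : ℝ) / t ≤ dist (A m) (A m')} := by
  classical
  have hclosed : IsClosed {K : NonemptyCompacts (EuclideanSpace ℝ (Fin N)) |
      ∃ A : Fin (d + 1) → EuclideanSpace ℝ (Fin N),
        (∀ m, A m ∈ (K : Set (EuclideanSpace ℝ (Fin N)))) ∧ ¬ AffineIndependent ℝ A ∧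
        ∀ m m', m ≠ m' → (1 : ℝ) / t ≤ dist (A m) (A m')} := by
    apply IsSeqClosed.isClosed
    intro Kseq K hKseq hlim
    have hdist : Tendsto (fun n => dist (Kseq n) K) atTop (𝓝 0) :=
      tendsto_iff_dist_tendsto_zero.mp hlim
    obtain ⟨n₀, hn₀⟩ := Metric.tendsto_atTop.mp hlim 1 one_pos
    choose A hmem hdep hsep using fun n => hKseq (n + n₀)
    have hinfle : ∀ n m, infDist (A n m) (K : Set (EuclideanSpace ℝ (Fin N)))
        ≤ dist (Kseq (n + n₀)) K := by
      intro n m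
      have hne : EMetric.hausdorffEdist ((Kseq (n + n₀)) : Set (EuclideanSpace ℝ (Fin N)))
          (K : Set (EuclideanSpace ℝ (Fin N))) ≠ ⊤ :=
        Metric.hausdorffEdist_ne_top_of_nonempty_of_bounded (Kseq (n + n₀)).nonempty K.nonempty
          (Kseq (n + n₀)).isCompact.isBounded K.isCompact.isBounded
      have h1 := Metric.infDist_le_infDist_add_hausdorffDist (x := A n m) hne
      rw [Metric.infDist_zero_of_mem (hmem n m), zero_add] at h1
      rw [NonemptyCompacts.dist_eq]
      exact h1
    set C : Set (EuclideanSpace ℝ (Fin N)) :=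
      Metric.cthickening 1 (K : Set (EuclideanSpace ℝ (Fin N))) with hC
    have hCcomp : IsCompact C := K.isCompact.cthickening
    have hmemC : ∀ n m, A n m ∈ C := by
      intro n m
      obtain ⟨y, hyK, hy⟩ := K.isCompact.exists_infDist_eq_dist K.nonempty (A n m)
      refine Metric.mem_cthickening_of_dist_le (A n m) y 1 _ hyK ?_
      rw [← hy]
      exact (hinfle n m).trans (hn₀ (n + n₀) (Nat.le_add_left n₀ n)).le
    have hpi : IsCompact (Set.univ.pi (fun _ : Fin (d + 1) => C)) :=
      isCompact_univ_pi (fun _ => hCcomp)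
    have hmempi : ∀ n, A n ∈ Set.univ.pi (fun _ : Fin (d + 1) => C) :=
      fun n m _ => hmemC n m
    obtain ⟨B, hB, φ, hφ, hBtend⟩ := hpi.tendsto_subseq hmempi
    have hBm : ∀ m, Tendsto (fun n => A (φ n) m) atTop (𝓝 (B m)) :=
      fun m => (tendsto_pi_nhds.mp hBtend) m
    have hLdist : Tendsto (fun n => dist (Kseq (φ n + n₀)) K) atTop (𝓝 0) :=
      hdist.comp ((tendsto_add_atTop_nat n₀).comp hφ.tendsto_atTop)
    refine ⟨B, ?_, ?_, ?_⟩
    · intro m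
      have h2 : Tendsto (fun n => infDist (A (φ n) m) (K : Set (EuclideanSpace ℝ (Fin N))))
          atTop (𝓝 (infDist (B m) (K : Set (EuclideanSpace ℝ (Fin N))))) :=
        ((continuous_infDist_pt ((K : Set (EuclideanSpace ℝ (Fin N))))).tendsto (B m)).comp (hBm m)
      have hle : infDist (B m) (K : Set (EuclideanSpace ℝ (Fin N))) ≤ 0 :=
        le_of_tendsto_of_tendsto' h2 hLdist (fun n => hinfle (φ n) m)
      exact (IsClosed.mem_iff_infDist_zero K.isCompact.isClosed K.nonempty).mpr
        (le_antisymm hle Metric.infDist_nonneg)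
    · exact (isClosed_dep N (d + 1)).mem_of_tendsto hBtend
        (Filter.Eventually.of_forall (fun n => hdep (φ n)))
    · intro m m' hmm
      exact ge_of_tendsto ((hBm m).dist (hBm m'))
        (Filter.Eventually.of_forall fun n => hsep (φ n) m m' hmm)
  refine ⟨hclosed, hclosed.isNowhereDense_iff.mpr ?_⟩
  rw [Set.eq_empty_iff_forall_notMem]
  intro K hK
  obtain ⟨ε, hε, hball⟩ := Metric.isOpen_iff.mp isOpen_interior K hK
  have hballS := hball.trans interior_subset
  have hε4 : (0 : ℝ) < ε / 4 := by linarith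
  obtain ⟨T, hTK, hTfin, hTcov⟩ := K.isCompact.finite_cover_balls hε4
  obtain ⟨F', hF1, hF2, hF3⟩ := exists_gp hd hdN hTfin.toFinset hε4
  obtain ⟨x₀, hx₀⟩ := K.nonempty
  obtain ⟨c, hcT, hcp⟩ := Set.mem_iUnion₂.mp (hTcov hx₀)
  obtain ⟨y₀, hy₀F', -⟩ := hF1 c (hTfin.mem_toFinset.mpr hcT)
  have hF'ne : (F' : Set (EuclideanSpace ℝ (Fin N))).Nonempty := ⟨y₀, hy₀F'⟩
  set K' : NonemptyCompacts (EuclideanSpace ℝ (Fin N)) :=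
    ⟨⟨(F' : Set (EuclideanSpace ℝ (Fin N))), F'.finite_toSet.isCompact⟩, hF'ne⟩ with hK'
  have hdd : dist K' K < ε := by
    rw [NonemptyCompacts.dist_eq]
    have hH : hausdorffDist (K' : Set (EuclideanSpace ℝ (Fin N)))
        (K : Set (EuclideanSpace ℝ (Fin N))) ≤ ε / 2 := by
      apply Metric.hausdorffDist_le_of_mem_dist (by linarith)
      · intro x hx
        obtain ⟨z, hzF, hzd⟩ := hF2 x hx
        exact ⟨z, hTK (hTfin.mem_toFinset.mp hzF), by rw [dist_comm]; linarith⟩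
      · intro y hy
        obtain ⟨c', hc'T, hc'd⟩ := Set.mem_iUnion₂.mp (hTcov hy)
        obtain ⟨y', hy'F', hy'd⟩ := hF1 c' (hTfin.mem_toFinset.mpr hc'T)
        refine ⟨y', hy'F', ?_⟩
        have h3 := dist_triangle y c' y'
        rw [Metric.mem_ball] at hc'd
        linarith
    linarith
  have hK'S := hballS (Metric.mem_ball.mpr hdd)
  obtain ⟨A, hAmem, hAdep, hAsep⟩ := hK'S
  have ht0 : (0 : ℝ) < 1 / t := by
    apply one_div_pos.mpr
    exact_mod_cast Nat.lt_of_lt_of_le Nat.zero_lt_one ht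
  have hinj : Function.Injective A := by
    intro m m' h
    by_contra hne
    have hcc := hAsep m m' hne
    rw [h, dist_self] at hcc
    linarith
  apply hAdep
  have hsub : Finset.univ.image A ⊆ F' := by
    intro x hx
    obtain ⟨m, -, rfl⟩ := Finset.mem_image.mp hx
    exact Finset.mem_coe.mp (hAmem m)
  have hcard : (Finset.univ.image A).card ≤ d + 1 := by
    rw [Finset.card_image_of_injective _ hinj, Finset.card_univ, Fintype.card_fin]
  have hai := hF3 (Finset.univ.image A) hsub hcard
  have hrange : ((Finset.univ.image A : Finset (EuclideanSpace ℝ (Fin N))) :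
      Set (EuclideanSpace ℝ (Fin N))) = Set.range A := by
    simp
  rw [hrange] at hai
  exact hai.of_set_of_injective hinj
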